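/- arXiv:2205.12139 — 4 statements merged into one kernel-verified Lean document; each statement's English description precedes it below -/
import Mathlib

section
/- Let f be a non-decreasing UPP function with parameters (T_f, d_f, c_f) where c_f > 0 (f is not ultimately constant) and f is finite everywhere. Then the lower pseudo-inverse f↓(y) = inf{x | f(x) ≥ y} is again UPP with transient start f(T_f + d_f), period c_f, and height d_f; that is, for all y ≥ f(T_f + d_f) and all k ∈ ℕ, f↓(y + k·c_f) = f↓(y) + k·d_f. -/
/-- Lower pseudo-inverse of f : ℚ≥0 → ℚ, as a real number:
f↓(y) = inf { x ≥ 0 | f(x) ≥ y }. -/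
noncomputable def lpiQ (f : ℚ → ℚ) (y : ℚ) : ℝ :=
  sInf {x : ℝ | ∃ q : ℚ, x = (q : ℝ) ∧ 0 ≤ q ∧ y ≤ f q}

/-- the lower pseudo-inverse of a non-decreasing, everywhere finite,
non-UC UPP function f with parameters (T, d, c), c > 0, is UPP with transient
start f(T + d), period c and height d. -/
theorem lpi_upp (f : ℚ → ℚ) (T d c : ℚ) (hT : 0 ≤ T) (hd : 0 < d) (hc : 0 < c)
    (hmono : ∀ x y : ℚ, 0 ≤ x → x ≤ y → f x ≤ f y)
    (hupp : ∀ t : ℚ, T ≤ t → ∀ k : ℕ, f (t + (k : ℚ) * d) = f t + (k : ℚ) * c) :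
    ∀ y : ℚ, f (T + d) ≤ y → ∀ k : ℕ,
      lpiQ f (y + (k : ℚ) * c) = lpiQ f y + (k : ℝ) * (d : ℝ) := by
  intro y hy k
  have hkd : 0 ≤ (k : ℚ) * d := by positivity
  have hfTd : f (T + d) = f T + c := by
    have h := hupp T le_rfl 1
    push_cast at h
    simpa [one_mul] using h
  have hTkd : f (T + (k : ℚ) * d) = f T + (k : ℚ) * c := hupp T le_rfl k
  set A : Set ℝ := {x : ℝ | ∃ q : ℚ, x = (q : ℝ) ∧ 0 ≤ q ∧ y ≤ f q} with hA
  have hset : {x : ℝ | ∃ q : ℚ, x = (q : ℝ) ∧ 0 ≤ q ∧ y + (k : ℚ) * c ≤ f q}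
      = (fun x : ℝ => x + (k : ℝ) * (d : ℝ)) '' A := by
    ext x
    constructor
    · rintro ⟨q, rfl, hq0, hqf⟩
      -- show q > T + k*d
      have hqT : T + (k : ℚ) * d < q := by
        by_contra h
        push_neg at h
        have h1 : f q ≤ f (T + (k : ℚ) * d) := hmono q _ hq0 h
        rw [hTkd] at h1
        have h2 : f T + c + (k : ℚ) * c ≤ f q := by
          calc f T + c + (k : ℚ) * c = f (T + d) + (k : ℚ) * c := by rw [hfTd]
          _ ≤ y + (k : ℚ) * c := by linarith
          _ ≤ f q := hqf
        linarith
      refine ⟨((q - (k : ℚ) * d : ℚ) : ℝ), ⟨q - (k : ℚ) * d, rfl, by linarith, ?_⟩, ?_⟩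
      · have hge : T ≤ q - (k : ℚ) * d := by linarith
        have := hupp (q - (k : ℚ) * d) hge k
        have heq : q - (k : ℚ) * d + (k : ℚ) * d = q := by ring
        rw [heq] at this
        linarith
      · push_cast; ring
    · rintro ⟨x, ⟨q, rfl, hq0, hqf⟩, rfl⟩
      refine ⟨q + (k : ℚ) * d, by push_cast; ring, by linarith, ?_⟩
      have hqT : T < q := by
        by_contra h
        push_neg at h
        have h1 : f q ≤ f T := hmono q T hq0 h
        have : f T + c ≤ f q := by rw [← hfTd]; linarith
        linarith
      have := hupp q (le_of_lt hqT) k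
      linarith
  have hne : A.Nonempty := by
    set m : ℕ := ⌈(y - f (T + d)) / c⌉₊ with hm
    have hmge : (y - f (T + d)) / c ≤ (m : ℚ) := Nat.le_ceil _
    have hmc : y - f (T + d) ≤ (m : ℚ) * c := by
      rw [div_le_iff₀ hc] at hmge; linarith
    have hfm := hupp (T + d) (by linarith) m
    refine ⟨((T + d + (m : ℚ) * d : ℚ) : ℝ), T + d + (m : ℚ) * d, rfl, ?_, ?_⟩
    · have : 0 ≤ (m : ℚ) * d := by positivity
      linarith
    · rw [hfm]; linarith
  have hbdd : BddBelow A := by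
    refine ⟨0, ?_⟩
    rintro x ⟨q, rfl, hq0, _⟩
    exact_mod_cast hq0
  have hiso := (OrderIso.addRight ((k : ℝ) * (d : ℝ))).map_csInf hne hbdd
  simp only [OrderIso.addRight_apply] at hiso
  unfold lpiQ
  rw [hset, ← hA, hiso, sInf_image']
end

section
/- Let f be a non-decreasing UPP function with parameters (T_f, d_f, c_f) where c_f > 0 (f is not ultimately constant) and f is finite everywhere. Then the upper pseudo-inverse f↑(y) = sup{x | f(x) ≤ y} is again UPP with transient start f(T_f), period c_f, and height d_f; that is, for all y ≥ f(T_f) and all k ∈ ℕ, f↑(y + k·c_f) = f↑(y) + k·d_f. -/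
/-- Upper pseudo-inverse of f : ℚ≥0 → ℚ, as a real number:
f↑(y) = sup { x ≥ 0 | f(x) ≤ y }. -/
noncomputable def upiQ (f : ℚ → ℚ) (y : ℚ) : ℝ :=
  sSup {x : ℝ | ∃ q : ℚ, x = (q : ℝ) ∧ 0 ≤ q ∧ f q ≤ y}

/-- the upper pseudo-inverse of a non-decreasing, everywhere finite,
non-UC UPP function f with parameters (T, d, c), c > 0, is UPP with transient
start f(T), period c and height d. -/
theorem upi_upp (f : ℚ → ℚ) (T d c : ℚ) (hT : 0 ≤ T) (hd : 0 < d) (hc : 0 < c)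
    (hmono : ∀ x y : ℚ, 0 ≤ x → x ≤ y → f x ≤ f y)
    (hupp : ∀ t : ℚ, T ≤ t → ∀ k : ℕ, f (t + (k : ℚ) * d) = f t + (k : ℚ) * c) :
    ∀ y : ℚ, f T ≤ y → ∀ k : ℕ,
      upiQ f (y + (k : ℚ) * c) = upiQ f y + (k : ℝ) * (d : ℝ) := by
  have hupp1 : ∀ t : ℚ, T ≤ t → f (t + d) = f t + c := by
    intro t ht
    have h := hupp t ht 1
    simpa using h
  set S : ℚ → Set ℝ := fun y => {x : ℝ | ∃ q : ℚ, x = (q : ℝ) ∧ 0 ≤ q ∧ f q ≤ y} with hS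
  have hupi : ∀ y : ℚ, upiQ f y = sSup (S y) := fun y => rfl
  have hbdd : ∀ y : ℚ, BddAbove (S y) := by
    intro y
    obtain ⟨k, hk⟩ := exists_nat_gt ((y - f T) / c)
    refine ⟨((T + (k : ℚ) * d : ℚ) : ℝ), ?_⟩
    rintro x ⟨q, rfl, hq0, hq⟩
    have hkc : y < f T + (k : ℚ) * c := by
      have := (div_lt_iff₀ hc).mp hk
      linarith
    have hqle : q ≤ T + (k : ℚ) * d := by
      by_contra h
      push_neg at h
      have h0 : (0:ℚ) ≤ T + (k : ℚ) * d := by positivity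
      have hm := hmono _ _ h0 h.le
      rw [hupp T le_rfl k] at hm
      linarith
    exact_mod_cast hqle
  have hmem : ∀ y : ℚ, f T ≤ y → ((T : ℝ) ∈ S y) := fun y hy => ⟨T, rfl, hT, hy⟩
  have hstep : ∀ y : ℚ, f T ≤ y → sSup (S (y + c)) = sSup (S y) + (d : ℝ) := by
    intro y hy
    have hne : (S y).Nonempty := ⟨_, hmem y hy⟩
    have hy' : f T ≤ y + c := by linarith
    have hne' : (S (y + c)).Nonempty := ⟨_, hmem _ hy'⟩
    have hTle : (T : ℝ) ≤ sSup (S y) := le_csSup (hbdd y) (hmem y hy)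
    apply le_antisymm
    · apply csSup_le hne'
      rintro x ⟨q, rfl, hq0, hq⟩
      rcases le_or_gt (T + d) q with h | h
      · have hqd : (0:ℚ) ≤ q - d := by linarith
        have hfq : f (q - d) ≤ y := by
          have hTqd : T ≤ q - d := by linarith
          have h2 := hupp1 (q - d) hTqd
          rw [sub_add_cancel] at h2
          linarith
        have h3 : ((q : ℝ) - (d : ℝ)) ≤ sSup (S y) := by
          refine le_csSup (hbdd y) ⟨q - d, ?_, hqd, hfq⟩
          push_cast; ring
        linarith
      · have h4 : (q : ℝ) < (T : ℝ) + (d : ℝ) := by exact_mod_cast h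
        linarith
    · apply (le_sub_iff_add_le.mp ?_ : sSup (S y) + (d:ℝ) ≤ sSup (S (y + c)))
      apply csSup_le hne
      rintro x ⟨q, rfl, hq0, hq⟩
      rcases le_or_gt T q with h | h
      · have hfqd : f (q + d) ≤ y + c := by rw [hupp1 q h]; linarith
        have hmem' : ((q:ℝ) + (d:ℝ)) ∈ S (y + c) :=
          ⟨q + d, by push_cast; ring, by linarith, hfqd⟩
        have h5 := le_csSup (hbdd (y + c)) hmem'
        linarith
      · have hfTd : f (T + d) ≤ y + c := by rw [hupp1 T le_rfl]; linarith
        have hmem' : ((T:ℝ) + (d:ℝ)) ∈ S (y + c) :=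
          ⟨T + d, by push_cast; ring, by linarith, hfTd⟩
        have h5 := le_csSup (hbdd (y + c)) hmem'
        have hq' : (q:ℝ) ≤ (T:ℝ) := by exact_mod_cast h.le
        linarith
  intro y hy k
  induction k with
  | zero => simp
  | succ n ih =>
    have hy' : f T ≤ y + (n : ℚ) * c := by
      have : (0:ℚ) ≤ (n : ℚ) * c := by positivity
      linarith
    have h1 : y + ((n + 1 : ℕ) : ℚ) * c = (y + (n : ℚ) * c) + c := by push_cast; ring
    rw [hupi] at *
    rw [h1, hstep (y + (n : ℚ) * c) hy', ih]
    push_cast; ring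
end

section
/- If f is non-decreasing and left-continuous, then the lower pseudo-inverse of its lower pseudo-inverse equals f, i.e., (f↓)↓ = f; likewise (f↑)↓ = f. -/
open Filter Topology

/-- Lower pseudo-inverse of g : ℝ≥0 → EReal: g↓(y) = inf { x ≥ 0 | g(x) ≥ y }. -/
noncomputable def lpiE (g : ℝ → EReal) (y : ℝ) : EReal :=
  sInf ((fun x : ℝ => (x : EReal)) '' {x | 0 ≤ x ∧ (y : EReal) ≤ g x})

/-- Upper pseudo-inverse of g : ℝ≥0 → EReal: g↑(y) = sup { x ≥ 0 | g(x) ≤ y }. -/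
noncomputable def upiE (g : ℝ → EReal) (y : ℝ) : EReal :=
  sSup ((fun x : ℝ => (x : EReal)) '' {x | 0 ≤ x ∧ g x ≤ (y : EReal)})

lemma exists_lt_of_ctsWithin (f : ℝ → ℝ) (x y : ℝ) (hx : 0 < x)
    (hlc : ContinuousWithinAt f (Set.Icc 0 x) x) (hy : y < f x) :
    ∃ t, 0 ≤ t ∧ t < x ∧ y < f t := by
  have h1 : ContinuousWithinAt f (Set.Ico 0 x) x := hlc.mono Set.Ico_subset_Icc_self
  have hne : (𝓝[Set.Ico 0 x] x).NeBot := by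
    rw [← mem_closure_iff_nhdsWithin_neBot, closure_Ico hx.ne]
    exact ⟨hx.le, le_refl x⟩
  have hev : ∀ᶠ t in 𝓝[Set.Ico 0 x] x, y < f t :=
    h1.eventually (eventually_gt_nhds hy)
  obtain ⟨t, hyt, ht0, htx⟩ := (hev.and eventually_mem_nhdsWithin).exists
  exact ⟨t, ht0, htx, hyt⟩

/-- if f : ℝ≥0 → ℝ≥0 is non-decreasing, left-continuous and f(0) = 0,
then (f↓)↓ = f and (f↑)↓ = f. -/
theorem lpi_lpi_eq (f : ℝ → ℝ) (hmono : MonotoneOn f (Set.Ici 0))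
    (hnonneg : ∀ x : ℝ, 0 ≤ x → 0 ≤ f x) (hf0 : f 0 = 0)
    (hlc : ∀ x : ℝ, 0 ≤ x → ContinuousWithinAt f (Set.Icc 0 x) x) :
    (∀ x : ℝ, 0 ≤ x → lpiE (lpiE (fun t => (f t : EReal))) x = (f x : EReal)) ∧
    (∀ x : ℝ, 0 ≤ x → lpiE (upiE (fun t => (f t : EReal))) x = (f x : EReal)) := by
  -- common lower bound argument
  have lower : ∀ (G : ℝ → EReal), (∀ y x : ℝ, 0 ≤ y → 0 ≤ x → y < f x → 0 < x →
      ∀ t, 0 ≤ t → t < x → y < f t → ¬ ((x : EReal) ≤ G y)) →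
      ∀ x : ℝ, 0 ≤ x → (f x : EReal) ≤ lpiE G x := by
    intro G hG x hx
    apply le_sInf
    rintro _ ⟨y, ⟨hy0, hxG⟩, rfl⟩
    rw [EReal.coe_le_coe_iff]
    by_contra hlt
    push_neg at hlt
    have hx0 : 0 < x := by
      rcases hx.lt_or_eq with h | h
      · exact h
      · exfalso; rw [← h, hf0] at hlt; exact absurd hy0 (not_le.mpr hlt)
    obtain ⟨t, ht0, htx, hyt⟩ := exists_lt_of_ctsWithin f x y hx0 (hlc x hx) hlt
    exact hG y x hy0 hx hlt hx0 t ht0 htx hyt hxG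
  constructor
  · intro x hx
    set F := lpiE (fun t => (f t : EReal)) with hF
    apply le_antisymm
    · -- lpiE F x ≤ f x : every y > f x is in the set
      have key : ∀ y : ℝ, f x < y → lpiE F x ≤ (y : EReal) := by
        intro y hy
        apply sInf_le
        refine ⟨y, ⟨le_trans (hnonneg x hx) hy.le, ?_⟩, rfl⟩
        apply le_sInf
        rintro _ ⟨t, ⟨ht0, hyft⟩, rfl⟩
        rw [EReal.coe_le_coe_iff] at hyft ⊢
        by_contra htx
        push_neg at htx
        have := hmono ht0 hx htx.le
        linarith
      by_contra h
      push_neg at h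
      obtain ⟨z, hz1, hz2⟩ := EReal.exists_between_coe_real h
      exact absurd (key z (EReal.coe_lt_coe_iff.mp hz1)) (not_le.mpr hz2)
    · refine lower _ ?_ x hx
      intro y x hy0 hx hlt hx0 t ht0 htx hyt hxG
      have hFle : lpiE (fun t => (f t : EReal)) y ≤ (t : EReal) :=
        sInf_le ⟨t, ⟨ht0, EReal.coe_le_coe_iff.mpr hyt.le⟩, rfl⟩
      have : (x : EReal) ≤ (t : EReal) := le_trans hxG hFle
      rw [EReal.coe_le_coe_iff] at this
      linarith
  · intro x hx
    apply le_antisymm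
    · apply sInf_le
      refine ⟨f x, ⟨hnonneg x hx, ?_⟩, rfl⟩
      exact le_sSup ⟨x, ⟨hx, le_refl _⟩, rfl⟩
    · refine lower _ ?_ x hx
      intro y x hy0 hx hlt hx0 t ht0 htx hyt hxG
      have hGle : upiE (fun t => (f t : EReal)) y ≤ (t : EReal) := by
        apply sSup_le
        rintro _ ⟨s, ⟨hs0, hfsy⟩, rfl⟩
        rw [EReal.coe_le_coe_iff] at hfsy ⊢
        by_contra hst
        push_neg at hst
        have := hmono ht0 hs0 hst.le
        linarith
      have : (x : EReal) ≤ (t : EReal) := le_trans hxG hGle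
      rw [EReal.coe_le_coe_iff] at this
      linarith
end

section
/- Let f be non-decreasing on an interval, constant equal to b₁ on ]t₁, t₂[ with a jump at t₂: f(t₂) = b₃ > b₁. Then for every y with b₁ < y ≤ b₃, the lower pseudo-inverse satisfies f↓(y) = t₂. -/
/-- case c1: if f is non-decreasing, constant equal to b₁ on
]t₁, t₂[ and f(t₂) = b₃ > b₁, then for every y with b₁ < y ≤ b₃ the lower
pseudo-inverse f↓(y) = inf { x | y ≤ f x } equals t₂. -/
theorem lpi_const_then_jump (f : ℝ → ℝ) (t₁ t₂ b₁ b₃ : ℝ) (h12 : t₁ < t₂)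
    (hf : Monotone f)
    (hconst : ∀ x : ℝ, x ∈ Set.Ioo t₁ t₂ → f x = b₁)
    (hjump : f t₂ = b₃) (hb : b₁ < b₃) :
    ∀ y : ℝ, b₁ < y → y ≤ b₃ → sInf {x : ℝ | y ≤ f x} = t₂ := by
  intro y hy1 hy2
  have hmem : t₂ ∈ {x : ℝ | y ≤ f x} := by simpa [hjump] using hy2
  have hlb : ∀ x ∈ {x : ℝ | y ≤ f x}, t₂ ≤ x := by
    intro x hx
    by_contra h
    push_neg at h
    have hfx : f x < y := by
      rcases le_or_gt x t₁ with h1 | h1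
      · obtain ⟨z, hz1, hz2⟩ := exists_between h12
        have : f x ≤ f z := hf (le_of_lt (lt_of_le_of_lt h1 hz1))
        calc f x ≤ b₁ := by rwa [hconst z ⟨hz1, hz2⟩] at this
          _ < y := hy1
      · rw [hconst x ⟨h1, h⟩]; exact hy1
    exact absurd hx (by simp [not_le.mpr hfx])
  exact le_antisymm (csInf_le ⟨t₂, hlb⟩ hmem) (le_csInf ⟨t₂, hmem⟩ hlb)
end
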